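/- Let G be a group, T an abelian subgroup, N a subgroup normalized by T, and suppose N has a filtration by the lower central series with n_λ: k → N_λ coordinate isomorphisms as in a unipotent group over a field k. Then for γ ∈ T and n ∈ N, the commutator γ n^{-1} γ^{-1} n, expressed in the coordinates n_λ, has λ-coordinate equal to (1 − λ(γ))t_λ plus a polynomial (with coefficients independent of γ, n) in the coordinates t_ν and values ν(γ) for roots ν that sum to λ with each ν strictly smaller in the chosen order. -/
import Mathlib



set_option linter.unusedSectionVars false
set_option maxHeartbeats 1000000
open MvPolynomial

namespace Stmt12Aux

variable {k : Type*} [Field k] {m : ℕ}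

def SS (m : ℕ) (k : Type*) [Field k] (c : ℕ) : Set ((Fin m × Bool → k) → k) :=
  {f | ∃ P : MvPolynomial (Fin m × Bool) k, (∀ p ∈ P.vars, p.1.val < c) ∧ ∀ x, f x = eval x P}

theorem SS_zero {c : ℕ} : (0 : (Fin m × Bool → k) → k) ∈ SS m k c :=
  ⟨0, by simp [vars_0], fun x => by simp⟩

theorem SS_const {c : ℕ} (a : k) : (fun _ => a) ∈ SS m k c :=
  ⟨C a, by simp [vars_C], fun x => by simp⟩

theorem SS_X {c : ℕ} (v : Fin m × Bool) (hv : v.1.val < c) :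
    (fun x => x v) ∈ SS m k c :=
  ⟨X v, by simp [vars_X, hv], fun x => by simp⟩

theorem SS_add {c : ℕ} {f g : (Fin m × Bool → k) → k} (hf : f ∈ SS m k c) (hg : g ∈ SS m k c) :
    f + g ∈ SS m k c := by
  obtain ⟨P, hP, hfP⟩ := hf
  obtain ⟨Q, hQ, hgQ⟩ := hg
  exact ⟨P + Q, fun p hp => by
    rcases Finset.mem_union.1 (vars_add_subset P Q hp) with h | h
    · exact hP p h
    · exact hQ p h,
    fun x => by simp [Pi.add_apply, hfP, hgQ]⟩

theorem SS_mul {c : ℕ} {f g : (Fin m × Bool → k) → k} (hf : f ∈ SS m k c) (hg : g ∈ SS m k c) :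
    f * g ∈ SS m k c := by
  obtain ⟨P, hP, hfP⟩ := hf
  obtain ⟨Q, hQ, hgQ⟩ := hg
  exact ⟨P * Q, fun p hp => by
    rcases Finset.mem_union.1 (vars_mul P Q hp) with h | h
    · exact hP p h
    · exact hQ p h,
    fun x => by simp [Pi.mul_apply, hfP, hgQ]⟩

theorem SS_neg {c : ℕ} {f : (Fin m × Bool → k) → k} (hf : f ∈ SS m k c) :
    -f ∈ SS m k c := by
  obtain ⟨P, hP, hfP⟩ := hf
  exact ⟨-P, fun p hp => hP p (by rwa [vars_neg] at hp), fun x => by simp [hfP]⟩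

theorem SS_sub {c : ℕ} {f g : (Fin m × Bool → k) → k} (hf : f ∈ SS m k c) (hg : g ∈ SS m k c) :
    f - g ∈ SS m k c := by
  rw [sub_eq_add_neg]; exact SS_add hf (SS_neg hg)

theorem SS_mono {c c' : ℕ} (h : c ≤ c') {f : (Fin m × Bool → k) → k} (hf : f ∈ SS m k c) :
    f ∈ SS m k c' := by
  obtain ⟨P, hP, hfP⟩ := hf
  exact ⟨P, fun p hp => lt_of_lt_of_le (hP p hp) h, hfP⟩

theorem SS_comp_all {c : ℕ} {σ : Type*} (Q : MvPolynomial σ k)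
    (h : σ → (Fin m × Bool → k) → k) (hh : ∀ v, h v ∈ SS m k c) :
    (fun x => eval (fun v => h v x) Q) ∈ SS m k c := by
  induction Q using MvPolynomial.induction_on with
  | C a => simpa using SS_const (m := m) a
  | add p q hp hq =>
      have : (fun x => eval (fun v => h v x) (p + q))
          = (fun x => eval (fun v => h v x) p) + (fun x => eval (fun v => h v x) q) := by
        funext x; simp
      rw [this]; exact SS_add hp hq
  | mul_X p v hp =>
      have : (fun x => eval (fun v => h v x) (p * X v))
          = (fun x => eval (fun v => h v x) p) * h v := by
        funext x; simp
      rw [this]; exact SS_mul hp (hh v)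

variable {G : Type*} [Group G]

def wlist (m j : ℕ) : List (Fin m) := (List.finRange m).drop j

theorem wlist_nil {j : ℕ} (h : m ≤ j) : wlist m j = [] :=
  List.drop_eq_nil_of_le (by simpa using h)

theorem wlist_cons {j : ℕ} (h : j < m) :
    wlist m j = (⟨j, h⟩ : Fin m) :: wlist m (j + 1) := by
  unfold wlist
  rw [List.drop_eq_getElem_cons (by simpa using h)]
  simp

theorem mem_wlist_ge {j : ℕ} {l : Fin m} (h : l ∈ wlist m j) : j ≤ l.val := by
  rw [List.mem_iff_getElem] at h
  obtain ⟨i, hi, rfl⟩ := h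
  unfold wlist at hi ⊢
  rw [List.getElem_drop]
  simp

def wrd (n : Fin m → k → G) (g : Fin m → (Fin m × Bool → k) → k) (j : ℕ)
    (x : Fin m × Bool → k) : G :=
  ((wlist m j).map fun l => n l (g l x)).prod

theorem wrd_nil {n : Fin m → k → G} {g} {j : ℕ} (h : m ≤ j) (x) : wrd n g j x = 1 := by
  rw [wrd, wlist_nil h]; simp

theorem wrd_cons {n : Fin m → k → G} (g) {j : ℕ} (h : j < m) (x) :
    wrd n g j x = n ⟨j, h⟩ (g ⟨j, h⟩ x) * wrd n g (j + 1) x := by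
  rw [wrd, wlist_cons h]; simp [wrd]

theorem wrd_congr {n : Fin m → k → G} {g g'} {j : ℕ} (x)
    (h : ∀ l : Fin m, j ≤ l.val → g l x = g' l x) : wrd n g j x = wrd n g' j x := by
  unfold wrd
  congr 1
  exact List.map_congr_left fun l hl => by rw [h l (mem_wlist_ge hl)]

theorem wrd_eq_of_vanish {n : Fin m → k → G} {g} (hone : ∀ i, n i 0 = 1) (x) :
    ∀ j : ℕ, (∀ l : Fin m, l.val < j → g l x = 0) → wrd n g 0 x = wrd n g j x := by
  intro j
  induction j with
  | zero => intro _; rfl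
  | succ j ih =>
      intro hv
      rw [ih fun l hl => hv l (by omega)]
      by_cases hj : j < m
      · rw [wrd_cons g hj, hv ⟨j, hj⟩ (by simp), hone, one_mul]
      · rw [wrd_nil (by omega), wrd_nil (by omega)]

def Wc (g : Fin m → (Fin m × Bool → k) → k) : Prop :=
  ∀ l : Fin m, g l ∈ SS m k (l.val + 1)

def MulS (n : Fin m → k → G) (j : ℕ) : Prop :=
  ∀ g h : Fin m → (Fin m × Bool → k) → k, Wc g → Wc h →
    ∃ u, Wc u ∧ (∀ l : Fin m, u l - (g l + h l) ∈ SS m k l.val) ∧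
      ∀ x, wrd n g j x * wrd n h j x = wrd n u j x

def InvS (n : Fin m → k → G) (j : ℕ) : Prop :=
  ∀ g : Fin m → (Fin m × Bool → k) → k, Wc g →
    ∃ u, Wc u ∧ (∀ l : Fin m, u l + g l ∈ SS m k l.val) ∧
      ∀ x, (wrd n g j x)⁻¹ = wrd n u j x

def ConjS (n : Fin m → k → G) (j : ℕ) : Prop :=
  ∀ (i : Fin m) (f : (Fin m × Bool → k) → k), i.val < j → f ∈ SS m k (i.val + 1) →
    ∀ g : Fin m → (Fin m × Bool → k) → k, Wc g →
    ∃ u, Wc u ∧ (∀ l : Fin m, u l - g l ∈ SS m k l.val) ∧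
      ∀ x, (n i (f x))⁻¹ * wrd n g j x * n i (f x) = wrd n u j x

theorem trivial_case {n : Fin m → k → G} {j : ℕ} (hj : m ≤ j) :
    MulS n j ∧ InvS n j ∧ ConjS n j := by
  refine ⟨?_, ?_, ?_⟩
  · intro g h hg hh
    refine ⟨g + h, fun l => SS_add (hg l) (hh l), fun l => ?_, fun x => ?_⟩
    · show g l + h l - (g l + h l) ∈ SS m k l.val
      rw [sub_self]; exact SS_zero
    · rw [wrd_nil hj, wrd_nil hj, wrd_nil hj, one_mul]
  · intro g hg
    refine ⟨-g, fun l => SS_neg (hg l), fun l => ?_, fun x => ?_⟩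
    · show -(g l) + g l ∈ SS m k l.val
      rw [neg_add_cancel]; exact SS_zero
    · rw [wrd_nil hj, wrd_nil hj, inv_one]
  · intro i f _ _ g hg
    refine ⟨g, hg, fun l => by rw [sub_self]; exact SS_zero, fun x => ?_⟩
    rw [wrd_nil hj]; group

theorem collect (n : Fin m → k → G) (hn : ∀ i s t, n i (s + t) = n i s * n i t)
    (hone : ∀ i, n i 0 = 1)
    (hcomm : ∀ i j : Fin m, i < j → ∃ Q : Fin m → MvPolynomial Bool k,
      (∀ l : Fin m, l ≤ j → Q l = 0) ∧
      ∀ s t : k, (n i s)⁻¹ * (n j t)⁻¹ * n i s * n j t =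
        ((List.finRange m).map fun l =>
          n l (MvPolynomial.eval (fun b => if b then t else s) (Q l))).prod) :
    ∀ d j : ℕ, m ≤ j + d → MulS n j ∧ InvS n j ∧ ConjS n j := by
  intro d
  induction d with
  | zero => intro j hj; exact trivial_case (by omega)
  | succ d ihd =>
    intro j hj
    by_cases hjm' : m ≤ j
    · exact trivial_case hjm'
    push_neg at hjm'
    obtain ⟨IHmul, IHinv, IHconj⟩ := ihd (j + 1) (by omega)
    have hconj : ConjS n j := by
      intro i f hij hf g hg
      obtain ⟨Q, hQ0, hQeq⟩ := hcomm i ⟨j, hjm'⟩ (by simpa [Fin.lt_def] using hij)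
      set q : Fin m → (Fin m × Bool → k) → k :=
        fun l x => eval (fun b => if b then g ⟨j, hjm'⟩ x else f x) (Q l) with hq
      have hq0 : ∀ l : Fin m, l.val ≤ j → q l = 0 := by
        intro l hl
        funext x
        simp [hq, hQ0 l (by simpa [Fin.le_def] using hl)]
      have hqSS : ∀ l : Fin m, q l ∈ SS m k l.val := by
        intro l
        by_cases hl : l.val ≤ j
        · rw [hq0 l hl]; exact SS_zero
        · have heq : q l = fun x =>
              eval (fun v : Bool => (if v then g ⟨j, hjm'⟩ else f) x) (Q l) := by
            funext x
            have harg : (fun b : Bool => if b then g ⟨j, hjm'⟩ x else f x)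
                = fun v : Bool => (if v then g ⟨j, hjm'⟩ else f) x := by
              funext b; cases b <;> simp
            show eval (fun b : Bool => if b then g ⟨j, hjm'⟩ x else f x) (Q l) = _
            rw [harg]
          rw [heq]
          exact SS_comp_all (Q l) (fun b : Bool => if b then g ⟨j, hjm'⟩ else f)
            (fun v => by
              cases v with
              | false => simpa using SS_mono (show i.val + 1 ≤ l.val by omega) hf
              | true =>
                  have hgJ : g ⟨j, hjm'⟩ ∈ SS m k (j + 1) := hg ⟨j, hjm'⟩
                  simpa using SS_mono (show j + 1 ≤ l.val by omega) hgJ)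
      have hWq : Wc q := fun l => SS_mono (by omega) (hqSS l)
      have hcommJ : ∀ x, (n i (f x))⁻¹ * (n ⟨j, hjm'⟩ (g ⟨j, hjm'⟩ x))⁻¹ * n i (f x) *
          n ⟨j, hjm'⟩ (g ⟨j, hjm'⟩ x) = wrd n q (j + 1) x := by
        intro x
        rw [hQeq (f x) (g ⟨j, hjm'⟩ x)]
        have h0 : ((List.finRange m).map fun l =>
            n l (eval (fun b => if b then g ⟨j, hjm'⟩ x else f x) (Q l))).prod
            = wrd n q 0 x := rfl
        rw [h0]
        exact wrd_eq_of_vanish hone x (j + 1) fun l hl => by simp [hq0 l (by omega)]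
      obtain ⟨u₁, hWu₁, hdu₁, hidu₁⟩ := IHinv q hWq
      have hu₁SS : ∀ l : Fin m, u₁ l ∈ SS m k l.val := by
        intro l
        have h1 := SS_sub (hdu₁ l) (hqSS l)
        have heq : u₁ l + q l - q l = u₁ l := by ring
        rwa [heq] at h1
      obtain ⟨u₂, hWu₂, hdu₂, hidu₂⟩ := IHconj i f (by omega) hf g hg
      obtain ⟨u₃, hWu₃, hdu₃, hidu₃⟩ := IHmul u₁ u₂ hWu₁ hWu₂
      refine ⟨Function.update u₃ ⟨j, hjm'⟩ (g ⟨j, hjm'⟩), ?_, ?_, ?_⟩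
      · intro l
        by_cases hl : l = ⟨j, hjm'⟩
        · rw [hl, Function.update_self]; exact hg ⟨j, hjm'⟩
        · rw [Function.update_of_ne hl]; exact hWu₃ l
      · intro l
        by_cases hl : l = ⟨j, hjm'⟩
        · rw [hl, Function.update_self, sub_self]; exact SS_zero
        · rw [Function.update_of_ne hl]
          have heq : u₃ l - g l = (u₃ l - (u₁ l + u₂ l)) + u₁ l + (u₂ l - g l) := by ring
          rw [heq]
          exact SS_add (SS_add (hdu₃ l) (hu₁SS l)) (hdu₂ l)
      · intro x
        rw [wrd_cons g hjm' x, wrd_cons (Function.update u₃ ⟨j, hjm'⟩ (g ⟨j, hjm'⟩)) hjm' x]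
        rw [Function.update_self]
        have e2 : wrd n (Function.update u₃ ⟨j, hjm'⟩ (g ⟨j, hjm'⟩)) (j + 1) x
            = wrd n u₃ (j + 1) x :=
          wrd_congr x fun l hl => by
            rw [Function.update_of_ne (Fin.ne_of_val_ne (show (l : ℕ) ≠ j by omega))]
        rw [e2, ← hidu₃ x, ← hidu₁ x, ← hcommJ x, ← hidu₂ x]
        group
    have hmul : MulS n j := by
      intro g h hg hh
      obtain ⟨u₂, hWu₂, hdu₂, hidu₂⟩ := IHconj ⟨j, hjm'⟩ (h ⟨j, hjm'⟩)
        (Nat.lt_succ_self j) (hh ⟨j, hjm'⟩) g hg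
      obtain ⟨u₃, hWu₃, hdu₃, hidu₃⟩ := IHmul u₂ h hWu₂ hh
      refine ⟨Function.update u₃ ⟨j, hjm'⟩ (g ⟨j, hjm'⟩ + h ⟨j, hjm'⟩), ?_, ?_, ?_⟩
      · intro l
        by_cases hl : l = ⟨j, hjm'⟩
        · rw [hl, Function.update_self]; exact SS_add (hg ⟨j, hjm'⟩) (hh ⟨j, hjm'⟩)
        · rw [Function.update_of_ne hl]; exact hWu₃ l
      · intro l
        by_cases hl : l = ⟨j, hjm'⟩
        · rw [hl, Function.update_self, sub_self]; exact SS_zero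
        · rw [Function.update_of_ne hl]
          have heq : u₃ l - (g l + h l) = (u₃ l - (u₂ l + h l)) + (u₂ l - g l) := by ring
          rw [heq]
          exact SS_add (hdu₃ l) (hdu₂ l)
      · intro x
        rw [wrd_cons g hjm' x, wrd_cons h hjm' x,
          wrd_cons (Function.update u₃ ⟨j, hjm'⟩ (g ⟨j, hjm'⟩ + h ⟨j, hjm'⟩)) hjm' x]
        rw [Function.update_self]
        have e2 : wrd n (Function.update u₃ ⟨j, hjm'⟩ (g ⟨j, hjm'⟩ + h ⟨j, hjm'⟩)) (j + 1) x
            = wrd n u₃ (j + 1) x :=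
          wrd_congr x fun l hl => by
            rw [Function.update_of_ne (Fin.ne_of_val_ne (show (l : ℕ) ≠ j by omega))]
        rw [e2, ← hidu₃ x, ← hidu₂ x]
        have e3 : (g ⟨j, hjm'⟩ + h ⟨j, hjm'⟩) x = g ⟨j, hjm'⟩ x + h ⟨j, hjm'⟩ x := rfl
        rw [e3, hn]
        group
    have hinv : InvS n j := by
      intro g hg
      obtain ⟨u', hWu', hdu', hidu'⟩ := IHinv g hg
      obtain ⟨u'', hWu'', hdu'', hidu''⟩ :=
        IHconj ⟨j, hjm'⟩ (-(g ⟨j, hjm'⟩)) (Nat.lt_succ_self j)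
          (SS_neg (hg ⟨j, hjm'⟩)) u' hWu'
      refine ⟨Function.update u'' ⟨j, hjm'⟩ (-(g ⟨j, hjm'⟩)), ?_, ?_, ?_⟩
      · intro l
        by_cases hl : l = ⟨j, hjm'⟩
        · rw [hl, Function.update_self]; exact SS_neg (hg ⟨j, hjm'⟩)
        · rw [Function.update_of_ne hl]; exact hWu'' l
      · intro l
        by_cases hl : l = ⟨j, hjm'⟩
        · rw [hl, Function.update_self, neg_add_cancel]; exact SS_zero
        · rw [Function.update_of_ne hl]
          have heq : u'' l + g l = (u'' l - u' l) + (u' l + g l) := by ring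
          rw [heq]
          exact SS_add (hdu'' l) (hdu' l)
      · intro x
        rw [wrd_cons g hjm' x, wrd_cons (Function.update u'' ⟨j, hjm'⟩ (-(g ⟨j, hjm'⟩))) hjm' x]
        rw [Function.update_self]
        have e2 : wrd n (Function.update u'' ⟨j, hjm'⟩ (-(g ⟨j, hjm'⟩))) (j + 1) x
            = wrd n u'' (j + 1) x :=
          wrd_congr x fun l hl => by
            rw [Function.update_of_ne (Fin.ne_of_val_ne (show (l : ℕ) ≠ j by omega))]
        have hninv : ∀ (i : Fin m) (t : k), (n i t)⁻¹ = n i (-t) := by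
          intro i t
          refine inv_eq_of_mul_eq_one_right ?_
          rw [← hn, add_neg_cancel, hone]
        rw [e2, ← hidu'' x, ← hidu' x]
        have e3 : (-(g ⟨j, hjm'⟩)) x = -(g ⟨j, hjm'⟩ x) := rfl
        rw [e3, ← hninv ⟨j, hjm'⟩ (g ⟨j, hjm'⟩ x)]
        group
    exact ⟨hmul, hinv, hconj⟩

end Stmt12Aux


open Stmt12Aux in
/-- Commutator formula in a unipotent group (Lemma `comm_ss_unip`): let `G` be a group, `k`
a field, and `n_1, …, n_m : k → G` coordinate one-parameter subgroups (indexed by a linearly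
ordered set of roots such that no root is a sum of larger roots, encoded by the hypothesis
that commutators of `n_i, n_j` with `i < j` land in coordinates of index `> j`, with
polynomial coordinates). Then there exist polynomials `P_i` in the variables `t_ν, ν(γ)`
(`ν < i`), independent of `γ` and `n`, such that for every `γ` acting on each coordinate
subgroup by the character value `χ_i = λ_i(γ)` and every `n = ∏ n_i(t_i)`, the commutator
`γ n⁻¹ γ⁻¹ n` equals `∏_i n_i((1 − χ_i) t_i + P_i(t, χ))`. -/
theorem stmt12 {G : Type*} [Group G] {k : Type*} [Field k] (m : ℕ)
    (n : Fin m → k → G) (hn : ∀ i s t, n i (s + t) = n i s * n i t)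
    (hcomm : ∀ i j : Fin m, i < j → ∃ Q : Fin m → MvPolynomial Bool k,
      (∀ l : Fin m, l ≤ j → Q l = 0) ∧
      ∀ s t : k, (n i s)⁻¹ * (n j t)⁻¹ * n i s * n j t =
        ((List.finRange m).map fun l =>
          n l (MvPolynomial.eval (fun b => if b then t else s) (Q l))).prod) :
    ∃ P : Fin m → MvPolynomial (Fin m × Bool) k,
      (∀ i : Fin m, ∀ p ∈ (P i).vars, p.1 < i) ∧
      ∀ (γ : G) (χ : Fin m → k), (∀ i t, γ * n i t * γ⁻¹ = n i (χ i * t)) →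
      ∀ t : Fin m → k,
        γ * (((List.finRange m).map fun i => n i (t i)).prod)⁻¹ * γ⁻¹ *
            ((List.finRange m).map fun i => n i (t i)).prod =
          ((List.finRange m).map fun i =>
            n i ((1 - χ i) * t i +
              MvPolynomial.eval (fun p : Fin m × Bool => if p.2 then t p.1 else χ p.1)
                (P i))).prod := by
  classical
  have hone : ∀ i, n i 0 = 1 := by
    intro i
    have h := hn i 0 0
    rw [add_zero] at h
    exact mul_left_cancel (a := n i 0) (by rw [mul_one, ← h])
  obtain ⟨Mul0, Inv0, -⟩ := collect n hn hone hcomm m 0 (by omega)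
  set gs : Fin m → (Fin m × Bool → k) → k := fun l x => x (l, false) * x (l, true) with hgs
  set gt : Fin m → (Fin m × Bool → k) → k := fun l x => x (l, true) with hgt
  have hWgs : Wc gs := fun l =>
    SS_mul (SS_X (l, false) (Nat.lt_succ_self _)) (SS_X (l, true) (Nat.lt_succ_self _))
  have hWgt : Wc gt := fun l => SS_X (l, true) (Nat.lt_succ_self _)
  obtain ⟨u₁, hWu₁, hdu₁, hidu₁⟩ := Inv0 gs hWgs
  obtain ⟨u, hWu, hdu, hidu⟩ := Mul0 u₁ gt hWu₁ hWgt
  have hr : ∀ l : Fin m, ∃ Pl : MvPolynomial (Fin m × Bool) k,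
      (∀ p ∈ Pl.vars, p.1.val < l.val) ∧
      ∀ x, ((u l - (u₁ l + gt l)) + (u₁ l + gs l)) x = MvPolynomial.eval x Pl :=
    fun l => SS_add (hdu l) (hdu₁ l)
  choose P hPvars hPeval using hr
  refine ⟨P, fun i p hp => ?_, ?_⟩
  · exact hPvars i p hp
  · intro γ χ hχ t
    set x : Fin m × Bool → k := fun p => if p.2 then t p.1 else χ p.1 with hx
    have hconjprod : ∀ L : List (Fin m), γ * (L.map fun i => n i (t i)).prod * γ⁻¹
        = (L.map fun i => n i (χ i * t i)).prod := by
      intro L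
      induction L with
      | nil => simp
      | cons a L ih =>
          simp only [List.map_cons, List.prod_cons]
          have hsplit : γ * (n a (t a) * (L.map fun i => n i (t i)).prod) * γ⁻¹
              = (γ * n a (t a) * γ⁻¹) * (γ * (L.map fun i => n i (t i)).prod * γ⁻¹) := by
            group
          rw [hsplit, hχ, ih]
    have e1 : ((List.finRange m).map fun i => n i (χ i * t i)).prod = wrd n gs 0 x := by
      have harg : (fun l : Fin m => n l (gs l x)) = fun i => n i (χ i * t i) := by
        funext i; simp [hgs, hx]
      show _ = ((List.finRange m).map fun l => n l (gs l x)).prod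
      rw [harg]
    have e2 : ((List.finRange m).map fun i => n i (t i)).prod = wrd n gt 0 x := by
      have harg : (fun l : Fin m => n l (gt l x)) = fun i => n i (t i) := by
        funext i; simp [hgt, hx]
      show _ = ((List.finRange m).map fun l => n l (gt l x)).prod
      rw [harg]
    have hLHS : γ * (((List.finRange m).map fun i => n i (t i)).prod)⁻¹ * γ⁻¹ *
            ((List.finRange m).map fun i => n i (t i)).prod
        = (wrd n gs 0 x)⁻¹ * wrd n gt 0 x := by
      rw [show γ * (((List.finRange m).map fun i => n i (t i)).prod)⁻¹ * γ⁻¹ *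
            ((List.finRange m).map fun i => n i (t i)).prod
          = (γ * ((List.finRange m).map fun i => n i (t i)).prod * γ⁻¹)⁻¹ *
            ((List.finRange m).map fun i => n i (t i)).prod from by group]
      rw [hconjprod (List.finRange m), e1, e2]
    rw [hLHS, hidu₁ x, hidu x]
    have harg : ∀ l : Fin m, u l x = (1 - χ l) * t l + MvPolynomial.eval x (P l) := by
      intro l
      have h1 := hPeval l x
      have h2 : u l x = ((u l - (u₁ l + gt l)) + (u₁ l + gs l)) x + (gt l x - gs l x) := by
        simp only [Pi.add_apply, Pi.sub_apply]; ring
      have e3 : gt l x = t l := by simp [hgt, hx]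
      have e4 : gs l x = χ l * t l := by simp [hgs, hx]
      rw [h2, h1, e3, e4]; ring
    have hfun : (fun l : Fin m => n l (u l x))
        = fun i => n i ((1 - χ i) * t i + MvPolynomial.eval x (P i)) := by
      funext l; rw [harg l]
    show ((List.finRange m).map fun l => n l (u l x)).prod = _
    rw [hfun]
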